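/- Let O be a Hermitian d×d complex matrix with at least three distinct eigenvalues. Then for every finite family of pairs (c_x, A_x) with c_x > 0 and A_x Hermitian with ‖A_x‖ ≤ 1 such that O = ∑_x c_x·A_x, there exists a unit vector ψ in ℂ^d (which may be taken supported on three eigenspaces of O) such that (∑_x c_x·√(1 − ⟨ψ, A_x ψ⟩²))² > ⟨ψ, O² ψ⟩ − ⟨ψ, O ψ⟩². -/

import Mathlib

open scoped Matrix Matrix.Norms.L2Operator

/-- The expectation value `⟨ψ, A ψ⟩` (real part) of a matrix `A` on a vector `ψ`. -/
noncomputable def expval {d : ℕ} (A : Matrix (Fin d) (Fin d) ℂ) (ψ : Fin d → ℂ) : ℝ :=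
  (star ψ ⬝ᵥ A.mulVec ψ).re

section Aux

variable {d : ℕ}

noncomputable def toE' (ψ : Fin d → ℂ) : EuclideanSpace ℂ (Fin d) := (WithLp.equiv 2 _).symm ψ

lemma inner_toE' (ψ φ : Fin d → ℂ) : (inner ℂ (toE' ψ) (toE' φ) : ℂ) = star ψ ⬝ᵥ φ :=
  (EuclideanSpace.inner_toLp_toLp ψ φ).trans (dotProduct_comm _ _)

lemma norm_toE'_one {ψ : Fin d → ℂ} (h : star ψ ⬝ᵥ ψ = 1) : ‖toE' ψ‖ = 1 := by
  have h1 : (inner ℂ (toE' ψ) (toE' ψ) : ℂ) = 1 := by rw [inner_toE', h]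
  have h2 : ((‖toE' ψ‖ : ℂ)) ^ 2 = 1 :=
    (inner_self_eq_norm_sq_to_K (𝕜 := ℂ) (toE' ψ)).symm.trans h1
  rw [← Complex.ofReal_pow] at h2
  have h3 : (‖toE' ψ‖ : ℝ) ^ 2 = 1 := by exact_mod_cast h2
  nlinarith [norm_nonneg (toE' ψ)]

lemma norm_mulVec_le' (A : Matrix (Fin d) (Fin d) ℂ) (ψ : Fin d → ℂ) :
    ‖toE' (A *ᵥ ψ)‖ ≤ ‖A‖ * ‖toE' ψ‖ :=
  A.l2_opNorm_mulVec (toE' ψ)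

lemma expval_sq_le' (A : Matrix (Fin d) (Fin d) ℂ) (ψ : Fin d → ℂ)
    (hψ : star ψ ⬝ᵥ ψ = 1) (hAn : ‖A‖ ≤ 1) : (star ψ ⬝ᵥ A *ᵥ ψ).re ^ 2 ≤ 1 := by
  have h1 : star ψ ⬝ᵥ A *ᵥ ψ = inner ℂ (toE' ψ) (toE' (A *ᵥ ψ)) := (inner_toE' _ _).symm
  have h2 : ‖(inner ℂ (toE' ψ) (toE' (A *ᵥ ψ)) : ℂ)‖ ≤ 1 := by
    refine (norm_inner_le_norm _ _).trans ?_
    rw [norm_toE'_one hψ, one_mul]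
    exact (norm_mulVec_le' A ψ).trans (by rw [norm_toE'_one hψ]; linarith)
  have h3 : |(star ψ ⬝ᵥ A *ᵥ ψ).re| ≤ 1 := by
    rw [h1]
    exact (Complex.abs_re_le_norm _).trans h2
  nlinarith [h3, abs_nonneg ((star ψ ⬝ᵥ A *ᵥ ψ).re), sq_abs ((star ψ ⬝ᵥ A *ᵥ ψ).re)]

lemma eigen_of_expval_one' (A : Matrix (Fin d) (Fin d) ℂ) (ψ : Fin d → ℂ)
    (hψ : star ψ ⬝ᵥ ψ = 1) (hAn : ‖A‖ ≤ 1) (ε : ℝ) (hε : ε = 1 ∨ ε = -1)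
    (h : (star ψ ⬝ᵥ A *ᵥ ψ).re = ε) : A *ᵥ ψ = (ε : ℂ) • ψ := by
  have hε2 : ε^2 = 1 := by rcases hε with h' | h' <;> rw [h'] <;> norm_num
  have hψn : ‖toE' ψ‖ = 1 := norm_toE'_one hψ
  have hv : ‖toE' (A *ᵥ ψ)‖ ≤ 1 := (norm_mulVec_le' A ψ).trans (by rw [hψn]; linarith)
  have hre : RCLike.re (inner ℂ (toE' (A *ᵥ ψ)) ((ε:ℂ) • toE' ψ) : ℂ) = ε * ε := by
    rw [inner_smul_right]
    have h6 : (inner ℂ (toE' (A *ᵥ ψ)) (toE' ψ) : ℂ) = star (A *ᵥ ψ) ⬝ᵥ ψ := inner_toE' _ _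
    rw [h6]
    have hconj : star (A *ᵥ ψ) ⬝ᵥ ψ = star (star ψ ⬝ᵥ A *ᵥ ψ) := by
      rw [← Matrix.star_dotProduct_star, star_star]
    rw [hconj]
    simp only [RCLike.re_to_complex, Complex.mul_re, Complex.ofReal_re, Complex.ofReal_im]
    simp [Complex.conj_re, h]
  have key : ‖toE' (A *ᵥ ψ) - (ε:ℂ) • toE' ψ‖ ^ 2 ≤ 0 := by
    rw [@norm_sub_sq ℂ]
    rw [hre]
    have h7 : ‖(ε:ℂ) • toE' ψ‖ = |ε| := by
      rw [norm_smul, hψn, mul_one, Complex.norm_real, Real.norm_eq_abs]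
    rw [h7]
    have h4 : |ε|^2 = 1 := by rw [sq_abs, hε2]
    have h5 : ε * ε = 1 := by nlinarith [hε2]
    nlinarith [hv, norm_nonneg (toE' (A *ᵥ ψ))]
  have hz : toE' (A *ᵥ ψ) - (ε:ℂ) • toE' ψ = 0 := by
    have h8 := norm_nonneg (toE' (A *ᵥ ψ) - (ε:ℂ) • toE' ψ)
    have h0 : ‖toE' (A *ᵥ ψ) - (ε:ℂ) • toE' ψ‖ = 0 := by nlinarith
    exact norm_eq_zero.mp h0
  have h9 : toE' (A *ᵥ ψ) = (ε:ℂ) • toE' ψ := by rwa [sub_eq_zero] at hz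
  have h10 : toE' (A *ᵥ ψ) = toE' ((ε:ℂ) • ψ) := by rw [h9]; rfl
  exact (WithLp.equiv 2 _).symm.injective h10

lemma dot_single' (u : Fin d → ℂ) (huu : star u ⬝ᵥ u = 1) (M : Matrix (Fin d) (Fin d) ℂ)
    (μ : ℝ) (hm : M *ᵥ u = (μ:ℂ) • u) : star u ⬝ᵥ M *ᵥ u = (μ:ℂ) := by
  rw [hm, dotProduct_smul, huu, smul_eq_mul, mul_one]

lemma dot3' (u1 u2 u3 : Fin d → ℂ) (M : Matrix (Fin d) (Fin d) ℂ) (μ1 μ2 μ3 : ℝ)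
    (h11 : star u1 ⬝ᵥ u1 = 1) (h22 : star u2 ⬝ᵥ u2 = 1) (h33 : star u3 ⬝ᵥ u3 = 1)
    (h12 : star u1 ⬝ᵥ u2 = 0) (h13 : star u1 ⬝ᵥ u3 = 0)
    (h21 : star u2 ⬝ᵥ u1 = 0) (h23 : star u2 ⬝ᵥ u3 = 0)
    (h31 : star u3 ⬝ᵥ u1 = 0) (h32 : star u3 ⬝ᵥ u2 = 0)
    (hm1 : M *ᵥ u1 = (μ1:ℂ) • u1) (hm2 : M *ᵥ u2 = (μ2:ℂ) • u2)
    (hm3 : M *ᵥ u3 = (μ3:ℂ) • u3) :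
    star ((((Real.sqrt 3)⁻¹ : ℝ) : ℂ) • (u1 + u2 + u3)) ⬝ᵥ
        M *ᵥ ((((Real.sqrt 3)⁻¹ : ℝ) : ℂ) • (u1 + u2 + u3))
      = (((μ1 + μ2 + μ3)/3 : ℝ) : ℂ) := by
  have hs3 : Real.sqrt 3 * Real.sqrt 3 = 3 := Real.mul_self_sqrt (by norm_num)
  have hsq : ((((Real.sqrt 3)⁻¹ : ℝ) : ℂ)) * ((((Real.sqrt 3)⁻¹ : ℝ) : ℂ)) = 1/3 := by
    rw [← Complex.ofReal_mul, ← mul_inv, hs3]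
    norm_num
  simp only [Matrix.mulVec_smul, Matrix.mulVec_add, hm1, hm2, hm3, star_smul, star_add,
    smul_dotProduct, dotProduct_smul, add_dotProduct,
    dotProduct_add, h11, h22, h33, h12, h13, h21, h23, h31, h32, smul_eq_mul,
    RCLike.star_def, Complex.conj_ofReal]
  push_cast
  have hsq' : (((Real.sqrt 3 : ℝ) : ℂ))⁻¹ * (((Real.sqrt 3 : ℝ) : ℂ))⁻¹ = 1/3 := by
    rw [← Complex.ofReal_inv]; exact hsq
  linear_combination (μ1 + μ2 + μ3) * hsq'

lemma dot_sum' {ι : Type*} [Fintype ι] (v : Fin d → ℂ) (w : ι → (Fin d → ℂ)) :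
    v ⬝ᵥ (∑ x, w x) = ∑ x, v ⬝ᵥ w x := by
  simp only [dotProduct, Finset.sum_apply, Finset.mul_sum]
  exact Finset.sum_comm

lemma lam_eq' {ι : Type*} [Fintype ι] (u : Fin d → ℂ) (huu : star u ⬝ᵥ u = 1)
    (O : Matrix (Fin d) (Fin d) ℂ) (lam : ℝ) (hOu : O *ᵥ u = (lam:ℂ) • u)
    (c : ι → ℝ) (A : ι → Matrix (Fin d) (Fin d) ℂ) (e : ι → ℝ)
    (hAu : ∀ x, A x *ᵥ u = ((e x : ℝ) : ℂ) • u)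
    (hdec : O = ∑ x, ((c x : ℝ) : ℂ) • A x) : lam = ∑ x, c x * e x := by
  have h1 : star u ⬝ᵥ O *ᵥ u = (lam:ℂ) := dot_single' u huu O lam hOu
  have h2 : O *ᵥ u = ∑ x, (((c x * e x : ℝ)) : ℂ) • u := by
    rw [hdec]
    have h3 := map_sum
      (Matrix.mulVec.addMonoidHomLeft u : Matrix (Fin d) (Fin d) ℂ →+ (Fin d → ℂ))
      (fun x => ((c x : ℝ) : ℂ) • A x) Finset.univ
    simp only [Matrix.mulVec.addMonoidHomLeft] at h3
    rw [show ((∑ x, ((c x : ℝ) : ℂ) • A x) *ᵥ u) = ∑ x, (((c x : ℝ) : ℂ) • A x) *ᵥ u from h3]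
    refine Finset.sum_congr rfl fun x _ => ?_
    rw [Matrix.smul_mulVec, hAu x, smul_smul, ← Complex.ofReal_mul]
  have h4 : star u ⬝ᵥ O *ᵥ u = ∑ x, (((c x * e x : ℝ)) : ℂ) := by
    rw [h2, dot_sum']
    refine Finset.sum_congr rfl fun x _ => ?_
    rw [dotProduct_smul, huu, smul_eq_mul, mul_one]
  rw [h4] at h1
  have h5 := congrArg Complex.re h1
  rw [Complex.re_sum, Complex.ofReal_re] at h5
  rw [← h5]
  exact Finset.sum_congr rfl fun x _ => (Complex.ofReal_re _).symm

end Aux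
lemma sqrt89 : Real.sqrt (8/9) = 2 * Real.sqrt 2 / 3 := by
  rw [show (8:ℝ)/9 = (2 * Real.sqrt 2 / 3)^2 by
    rw [div_pow, mul_pow, Real.sq_sqrt (by norm_num : (0:ℝ) ≤ 2)]; norm_num]
  exact Real.sqrt_sq (by positivity)

lemma arith {ι : Type*} [Fintype ι] (c e1 e2 e3 : ι → ℝ) (hc : ∀ x, 0 < c x)
    (he1 : ∀ x, e1 x = 1 ∨ e1 x = -1) (he2 : ∀ x, e2 x = 1 ∨ e2 x = -1)
    (he3 : ∀ x, e3 x = 1 ∨ e3 x = -1)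
    (L1 L2 L3 : ℝ)
    (hL1 : L1 = ∑ x, c x * e1 x) (hL2 : L2 = ∑ x, c x * e2 x)
    (hL3 : L3 = ∑ x, c x * e3 x)
    (h12 : L1 ≠ L2) (h13 : L1 ≠ L3) (h23 : L2 ≠ L3) :
    (L1^2 + L2^2 + L3^2)/3 - ((L1 + L2 + L3)/3)^2
      < (∑ x, c x * Real.sqrt (1 - ((e1 x + e2 x + e3 x)/3)^2))^2 := by
  classical
  set s12 : ℝ := ∑ x, (if e1 x = e2 x then 0 else c x) with hs12def
  set s13 : ℝ := ∑ x, (if e1 x = e3 x then 0 else c x) with hs13def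
  set s23 : ℝ := ∑ x, (if e2 x = e3 x then 0 else c x) with hs23def
  set C : ℝ := ∑ x, (if e1 x = e2 x ∧ e2 x = e3 x then 0 else c x) with hCdef
  have symm : ∀ (f g : ι → ℝ), (∑ x, (if f x = g x then 0 else c x))
      = ∑ x, (if g x = f x then 0 else c x) :=
    fun f g => Finset.sum_congr rfl fun x _ => if_congr eq_comm rfl rfl
  have key : ∀ (f g : ι → ℝ), (∀ x, f x = 1 ∨ f x = -1) → (∀ x, g x = 1 ∨ g x = -1) →
      |(∑ x, c x * f x) - (∑ x, c x * g x)| ≤ 2 * ∑ x, (if f x = g x then 0 else c x) := by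
    intro f g hf hg
    rw [← Finset.sum_sub_distrib, Finset.mul_sum]
    refine (Finset.abs_sum_le_sum_abs _ _).trans (Finset.sum_le_sum fun x _ => ?_)
    have hcx := hc x
    have habs : |c x| = c x := abs_of_pos hcx
    rcases hf x with h | h <;> rcases hg x with h' | h' <;> rw [h, h']
    · simp
    · rw [if_neg (by norm_num), show c x * 1 - c x * -1 = 2 * c x by ring,
        abs_of_pos (by linarith)]
    · rw [if_neg (by norm_num), show c x * -1 - c x * 1 = -(2 * c x) by ring,
        abs_neg, abs_of_pos (by linarith)]
    · simp
  have hb12 : |L1 - L2| ≤ 2 * s12 := by rw [hL1, hL2]; exact key _ _ he1 he2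
  have hb13 : |L1 - L3| ≤ 2 * s13 := by rw [hL1, hL3]; exact key _ _ he1 he3
  have hb23 : |L2 - L3| ≤ 2 * s23 := by rw [hL2, hL3]; exact key _ _ he2 he3
  have hp12 : 0 < s12 := by
    have : 0 < |L1 - L2| := abs_pos.2 (sub_ne_zero.2 h12); linarith
  have hp13 : 0 < s13 := by
    have : 0 < |L1 - L3| := abs_pos.2 (sub_ne_zero.2 h13); linarith
  have hp23 : 0 < s23 := by
    have : 0 < |L2 - L3| := abs_pos.2 (sub_ne_zero.2 h23); linarith
  have tri : ∀ (f g h : ι → ℝ),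
      (∑ x, (if f x = h x then 0 else c x))
        ≤ (∑ x, (if f x = g x then 0 else c x)) + ∑ x, (if g x = h x then 0 else c x) := by
    intro f g h
    rw [← Finset.sum_add_distrib]
    refine Finset.sum_le_sum fun x _ => ?_
    have hcx := hc x
    rcases eq_or_ne (f x) (g x) with h1 | h1 <;> rcases eq_or_ne (g x) (h x) with h2 | h2
    · simp [h1, h2, h1.trans h2]
    · have : f x ≠ h x := fun hh => h2 (h1.symm.trans hh)
      simp [h1, h2, this]
    · have : f x ≠ h x := fun hh => h1 (hh.trans h2.symm)
      simp [h1, h2, this]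
    · rw [if_neg h1, if_neg h2]
      split <;> linarith
  have ht1 : s13 ≤ s12 + s23 := tri e1 e2 e3
  have ht2 : s12 ≤ s13 + s23 := by
    have := tri e1 e3 e2
    rwa [show (∑ x, (if e3 x = e2 x then 0 else c x)) = s23 from (symm e2 e3).symm] at this
  have ht3 : s23 ≤ s12 + s13 := by
    have := tri e2 e1 e3
    rwa [show (∑ x, (if e2 x = e1 x then 0 else c x)) = s12 from (symm e1 e2).symm] at this
  have hC2 : 2 * C = s12 + s13 + s23 := by
    rw [hCdef, hs12def, hs13def, hs23def, Finset.mul_sum, ← Finset.sum_add_distrib,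
      ← Finset.sum_add_distrib]
    refine Finset.sum_congr rfl fun x _ => ?_
    rcases he1 x with h | h <;> rcases he2 x with h' | h' <;> rcases he3 x with h'' | h'' <;>
      rw [h, h', h''] <;> norm_num <;> ring
  have hrhs : ∑ x, c x * Real.sqrt (1 - ((e1 x + e2 x + e3 x)/3)^2)
      = 2 * Real.sqrt 2 / 3 * C := by
    rw [hCdef, Finset.mul_sum]
    refine Finset.sum_congr rfl fun x _ => ?_
    by_cases hcond : e1 x = e2 x ∧ e2 x = e3 x
    · rw [if_pos hcond]
      obtain ⟨ha, hb⟩ := hcond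
      rw [show (1:ℝ) - ((e1 x + e2 x + e3 x)/3)^2 = 0 by
        rw [← hb, ← ha]
        rcases he1 x with h | h <;> rw [h] <;> norm_num]
      rw [Real.sqrt_zero]; ring
    · rw [if_neg hcond]
      rcases he1 x with h | h <;> rcases he2 x with h' | h' <;> rcases he3 x with h'' | h''
      · exact absurd ⟨h.trans h'.symm, h'.trans h''.symm⟩ hcond
      · rw [show (1:ℝ) - ((e1 x + e2 x + e3 x)/3)^2 = 8/9 by
          rw [h, h', h'']; norm_num, sqrt89]; ring
      · rw [show (1:ℝ) - ((e1 x + e2 x + e3 x)/3)^2 = 8/9 by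
          rw [h, h', h'']; norm_num, sqrt89]; ring
      · rw [show (1:ℝ) - ((e1 x + e2 x + e3 x)/3)^2 = 8/9 by
          rw [h, h', h'']; norm_num, sqrt89]; ring
      · rw [show (1:ℝ) - ((e1 x + e2 x + e3 x)/3)^2 = 8/9 by
          rw [h, h', h'']; norm_num, sqrt89]; ring
      · rw [show (1:ℝ) - ((e1 x + e2 x + e3 x)/3)^2 = 8/9 by
          rw [h, h', h'']; norm_num, sqrt89]; ring
      · rw [show (1:ℝ) - ((e1 x + e2 x + e3 x)/3)^2 = 8/9 by
          rw [h, h', h'']; norm_num, sqrt89]; ring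
      · exact absurd ⟨h.trans h'.symm, h'.trans h''.symm⟩ hcond
  rw [hrhs]
  have hsq : ∀ a b : ℝ, |a| ≤ 2 * b → a^2 ≤ 4 * b^2 := by
    intro a b h
    have h2 := pow_le_pow_left₀ (abs_nonneg a) h 2
    rw [sq_abs] at h2; nlinarith
  have e12 := hsq _ _ hb12
  have e13 := hsq _ _ hb13
  have e23 := hsq _ _ hb23
  have hsqrt2 : Real.sqrt 2 ^ 2 = 2 := Real.sq_sqrt (by norm_num)
  have h2 : (2 * Real.sqrt 2 / 3 * C)^2 = 8/9 * C^2 := by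
    rw [mul_pow, div_pow, mul_pow, hsqrt2]; ring
  rw [h2]
  have hC4 : s12^2 + s13^2 + s23^2 + 2*(s12*s13 + s13*s23 + s12*s23) = 4 * C^2 := by
    linear_combination (-(s12 + s13 + s23 + 2*C)) * hC2
  have main : s12^2 + s13^2 + s23^2 < 2*(s12*s13 + s13*s23 + s12*s23) := by
    nlinarith [mul_pos hp12 hp23, mul_pos hp12 hp13, mul_pos hp13 hp23,
      mul_nonneg (sub_nonneg.2 ht1) (sub_nonneg.2 ht2),
      mul_nonneg (sub_nonneg.2 ht2) (sub_nonneg.2 ht3),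
      mul_nonneg (sub_nonneg.2 ht1) (sub_nonneg.2 ht3)]
  have expand : (L1^2 + L2^2 + L3^2)/3 - ((L1 + L2 + L3)/3)^2
      = ((L1-L2)^2 + (L1-L3)^2 + (L2-L3)^2)/9 := by ring
  rw [expand]
  linarith

/-- Impossibility part of **Lemma 4**: if a Hermitian matrix `O` has at least three
distinct eigenvalues, then for every linear decomposition `O = ∑_x c_x A_x` with
`c_x > 0` and `A_x` Hermitian of (`ℓ²`-operator) norm at most `1`, there exists a unit
vector `ψ` on which the optimal-allocation cost `(∑_x c_x √(1 − ⟨ψ, A_x ψ⟩²))²` strictly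
exceeds the von Neumann variance `⟨ψ, O² ψ⟩ − ⟨ψ, O ψ⟩²`. -/
theorem stmt_18 {d : ℕ} (O : Matrix (Fin d) (Fin d) ℂ) (hO : O.IsHermitian)
    (h3 : 3 ≤ (Finset.univ.image hO.eigenvalues).card)
    (ι : Type*) [Fintype ι] (c : ι → ℝ) (A : ι → Matrix (Fin d) (Fin d) ℂ)
    (hc : ∀ x, 0 < c x) (hA : ∀ x, (A x).IsHermitian) (hAn : ∀ x, ‖A x‖ ≤ 1)
    (hdecomp : O = ∑ x, c x • A x) :
    ∃ ψ : Fin d → ℂ, star ψ ⬝ᵥ ψ = 1 ∧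
      (∑ x, c x * Real.sqrt (1 - expval (A x) ψ ^ 2)) ^ 2
        > (star ψ ⬝ᵥ (O * O).mulVec ψ).re - (star ψ ⬝ᵥ O.mulVec ψ).re ^ 2 := by
  classical
  obtain ⟨a, b, c', ha, hb, hc', hab, hac, hbc⟩ := Finset.two_lt_card_iff.mp h3
  obtain ⟨i1, -, hi1⟩ := Finset.mem_image.mp ha
  obtain ⟨i2, -, hi2⟩ := Finset.mem_image.mp hb
  obtain ⟨i3, -, hi3⟩ := Finset.mem_image.mp hc'
  set lam := hO.eigenvalues with hlam
  have hl12 : lam i1 ≠ lam i2 := by rw [hi1, hi2]; exact hab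
  have hl13 : lam i1 ≠ lam i3 := by rw [hi1, hi3]; exact hac
  have hl23 : lam i2 ≠ lam i3 := by rw [hi2, hi3]; exact hbc
  set u : Fin d → (Fin d → ℂ) := fun m => ⇑(hO.eigenvectorBasis m) with hudef
  have hdot : ∀ m m' : Fin d, star (u m) ⬝ᵥ u m' = if m = m' then 1 else 0 := by
    intro m m'
    have h := orthonormal_iff_ite.mp hO.eigenvectorBasis.orthonormal m m'
    rw [hudef, dotProduct_comm]
    exact h
  have hunit : ∀ m, star (u m) ⬝ᵥ u m = 1 := fun m => by rw [hdot m m, if_pos rfl]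
  have hmulO : ∀ m, O *ᵥ u m = ((lam m : ℝ) : ℂ) • u m := by
    intro m
    rw [hudef, hO.mulVec_eigenvectorBasis m]
    funext i
    simp [Pi.smul_apply, Complex.real_smul, hlam]
  have hmulO2 : ∀ m, (O * O) *ᵥ u m = ((lam m ^ 2 : ℝ) : ℂ) • u m := by
    intro m
    rw [← Matrix.mulVec_mulVec, hmulO m, Matrix.mulVec_smul, hmulO m, smul_smul,
      ← Complex.ofReal_mul, ← sq]
  have hdecomp' : O = ∑ x, ((c x : ℝ) : ℂ) • A x := by
    rw [hdecomp]
    refine Finset.sum_congr rfl fun x _ => ?_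
    ext i j
    simp [Matrix.smul_apply, Complex.real_smul]
  by_cases hall : ∀ x, ∀ m ∈ ({i1, i2, i3} : Finset (Fin d)),
      expval (A x) (u m) = 1 ∨ expval (A x) (u m) = -1
  · -- all expectation values ±1 on the three eigenvectors
    set e1 : ι → ℝ := fun x => expval (A x) (u i1) with he1def
    set e2 : ι → ℝ := fun x => expval (A x) (u i2) with he2def
    set e3 : ι → ℝ := fun x => expval (A x) (u i3) with he3def
    have he1 : ∀ x, e1 x = 1 ∨ e1 x = -1 := fun x => hall x i1 (by simp)
    have he2 : ∀ x, e2 x = 1 ∨ e2 x = -1 := fun x => hall x i2 (by simp)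
    have he3 : ∀ x, e3 x = 1 ∨ e3 x = -1 := fun x => hall x i3 (by simp)
    have hA1 : ∀ x, A x *ᵥ u i1 = ((e1 x : ℝ) : ℂ) • u i1 := fun x =>
      eigen_of_expval_one' (A x) (u i1) (hunit i1) (hAn x) (e1 x) (he1 x) rfl
    have hA2 : ∀ x, A x *ᵥ u i2 = ((e2 x : ℝ) : ℂ) • u i2 := fun x =>
      eigen_of_expval_one' (A x) (u i2) (hunit i2) (hAn x) (e2 x) (he2 x) rfl
    have hA3 : ∀ x, A x *ᵥ u i3 = ((e3 x : ℝ) : ℂ) • u i3 := fun x =>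
      eigen_of_expval_one' (A x) (u i3) (hunit i3) (hAn x) (e3 x) (he3 x) rfl
    have hL1 : lam i1 = ∑ x, c x * e1 x :=
      lam_eq' (u i1) (hunit i1) O (lam i1) (hmulO i1) c A e1 hA1 hdecomp'
    have hL2 : lam i2 = ∑ x, c x * e2 x :=
      lam_eq' (u i2) (hunit i2) O (lam i2) (hmulO i2) c A e2 hA2 hdecomp'
    have hL3 : lam i3 = ∑ x, c x * e3 x :=
      lam_eq' (u i3) (hunit i3) O (lam i3) (hmulO i3) c A e3 hA3 hdecomp'
    -- distinctness of indices
    have hne12 : i1 ≠ i2 := fun h => hl12 (congrArg lam h)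
    have hne13 : i1 ≠ i3 := fun h => hl13 (congrArg lam h)
    have hne23 : i2 ≠ i3 := fun h => hl23 (congrArg lam h)
    have h12 : star (u i1) ⬝ᵥ u i2 = 0 := by rw [hdot, if_neg hne12]
    have h13 : star (u i1) ⬝ᵥ u i3 = 0 := by rw [hdot, if_neg hne13]
    have h21 : star (u i2) ⬝ᵥ u i1 = 0 := by rw [hdot, if_neg hne12.symm]
    have h23 : star (u i2) ⬝ᵥ u i3 = 0 := by rw [hdot, if_neg hne23]
    have h31 : star (u i3) ⬝ᵥ u i1 = 0 := by rw [hdot, if_neg hne13.symm]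
    have h32 : star (u i3) ⬝ᵥ u i2 = 0 := by rw [hdot, if_neg hne23.symm]
    set ψ : Fin d → ℂ := (((Real.sqrt 3)⁻¹ : ℝ) : ℂ) • (u i1 + u i2 + u i3) with hψdef
    have dot3th : ∀ (M : Matrix (Fin d) (Fin d) ℂ) (μ1 μ2 μ3 : ℝ),
        (M *ᵥ u i1 = (μ1:ℂ) • u i1) → (M *ᵥ u i2 = (μ2:ℂ) • u i2) →
        (M *ᵥ u i3 = (μ3:ℂ) • u i3) →
        star ψ ⬝ᵥ M *ᵥ ψ = (((μ1 + μ2 + μ3)/3 : ℝ) : ℂ) := fun M μ1 μ2 μ3 hm1 hm2 hm3 =>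
      dot3' (u i1) (u i2) (u i3) M μ1 μ2 μ3 (hunit i1) (hunit i2) (hunit i3)
        h12 h13 h21 h23 h31 h32 hm1 hm2 hm3
    have hψunit : star ψ ⬝ᵥ ψ = 1 := by
      have h := dot3th 1 1 1 1 (by rw [Matrix.one_mulVec, Complex.ofReal_one, one_smul])
        (by rw [Matrix.one_mulVec, Complex.ofReal_one, one_smul])
        (by rw [Matrix.one_mulVec, Complex.ofReal_one, one_smul])
      rw [Matrix.one_mulVec] at h
      rw [h]
      norm_num
    refine ⟨ψ, hψunit, ?_⟩
    have hgoal1 : (star ψ ⬝ᵥ (O * O) *ᵥ ψ).re = (lam i1 ^ 2 + lam i2 ^ 2 + lam i3 ^ 2)/3 := by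
      rw [dot3th (O * O) (lam i1 ^ 2) (lam i2 ^ 2) (lam i3 ^ 2) (hmulO2 i1) (hmulO2 i2)
        (hmulO2 i3), Complex.ofReal_re]
    have hgoal2 : (star ψ ⬝ᵥ O *ᵥ ψ).re = (lam i1 + lam i2 + lam i3)/3 := by
      rw [dot3th O (lam i1) (lam i2) (lam i3) (hmulO i1) (hmulO i2) (hmulO i3),
        Complex.ofReal_re]
    have hexp : ∀ x, expval (A x) ψ = (e1 x + e2 x + e3 x)/3 := by
      intro x
      show (star ψ ⬝ᵥ A x *ᵥ ψ).re = _
      rw [dot3th (A x) (e1 x) (e2 x) (e3 x) (hA1 x) (hA2 x) (hA3 x), Complex.ofReal_re]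
    have hsum : (∑ x, c x * Real.sqrt (1 - expval (A x) ψ ^ 2))
        = ∑ x, c x * Real.sqrt (1 - ((e1 x + e2 x + e3 x)/3) ^ 2) :=
      Finset.sum_congr rfl fun x _ => by rw [hexp x]
    rw [hgoal1, hgoal2, hsum]
    exact arith c e1 e2 e3 hc he1 he2 he3 (lam i1) (lam i2) (lam i3) hL1 hL2 hL3 hl12 hl13 hl23
  · -- some expectation value is strictly inside (-1, 1): take that eigenvector
    push_neg at hall
    obtain ⟨x0, m0, hm0, hne1, hne2⟩ := hall
    refine ⟨u m0, hunit m0, ?_⟩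
    have hgoal1 : (star (u m0) ⬝ᵥ (O * O) *ᵥ u m0).re = lam m0 ^ 2 := by
      rw [dot_single' (u m0) (hunit m0) (O * O) (lam m0 ^ 2) (hmulO2 m0), Complex.ofReal_re]
    have hgoal2 : (star (u m0) ⬝ᵥ O *ᵥ u m0).re = lam m0 := by
      rw [dot_single' (u m0) (hunit m0) O (lam m0) (hmulO m0), Complex.ofReal_re]
    rw [hgoal1, hgoal2, sub_self]
    have hle : expval (A x0) (u m0) ^ 2 ≤ 1 := expval_sq_le' (A x0) (u m0) (hunit m0) (hAn x0)
    have hlt : expval (A x0) (u m0) ^ 2 < 1 := by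
      rcases lt_or_eq_of_le hle with h | h
      · exact h
      · exfalso
        have hfac : (expval (A x0) (u m0) - 1) * (expval (A x0) (u m0) + 1) = 0 := by
          nlinarith [h]
        rcases mul_eq_zero.mp hfac with h' | h'
        · exact hne1 (by linarith)
        · exact hne2 (by linarith)
    have hpos : 0 < ∑ x, c x * Real.sqrt (1 - expval (A x) (u m0) ^ 2) := by
      refine Finset.sum_pos' (fun x _ => mul_nonneg (hc x).le (Real.sqrt_nonneg _)) ?_
      exact ⟨x0, Finset.mem_univ x0,
        mul_pos (hc x0) (Real.sqrt_pos.mpr (by linarith))⟩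
    positivity
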